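/- Let f be an n-variable Boolean function and t an integer with 1 ≤ t ≤ n. Then: (1) t-inf(f) attains its maximum value 1 if and only if f is (n−t)-resilient; (2) t-inf(f) attains its minimum value 0 if and only if f is a constant function. -/

import Mathlib

open Finset

namespace BF

/-- Hamming weight of a vector in `F_2^n`. -/
def wt {n : ℕ} (a : Fin n → ZMod 2) : ℕ := (univ.filter fun i => a i ≠ 0).card

/-- Normalised Walsh transform `W_f(a) = 2^{-n} Σ_x (-1)^{f(x) ⊕ ⟨x,a⟩}`. -/
noncomputable def walsh {n : ℕ} (f : (Fin n → ZMod 2) → ZMod 2) (a : Fin n → ZMod 2) : ℝ :=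
  (1 / 2 ^ n) * ∑ x : Fin n → ZMod 2, (-1 : ℝ) ^ (f x + ∑ i, x i * a i).val

/-- Normalised auto-correlation `C_f(a) = 2^{-n} Σ_x (-1)^{f(x) ⊕ f(x ⊕ a)}`. -/
noncomputable def autocorr {n : ℕ} (f : (Fin n → ZMod 2) → ZMod 2) (a : Fin n → ZMod 2) : ℝ :=
  (1 / 2 ^ n) * ∑ x : Fin n → ZMod 2, (-1 : ℝ) ^ (f x + f (x + a)).val

/-- Influence of the set of variables `T` on `f`:
`inf_f(T) = 1 - 2^{-#T} Σ_{a ≤ χ_T} C_f(a)`. -/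
noncomputable def influence {n : ℕ} (f : (Fin n → ZMod 2) → ZMod 2) (T : Finset (Fin n)) : ℝ :=
  1 - (1 / 2 ^ T.card) *
    ∑ a ∈ univ.filter (fun a : Fin n → ZMod 2 => ∀ i, a i ≠ 0 → i ∈ T), autocorr f a

/-- Total influence `t-inf(f) = (Σ_{#T = t} inf_f(T)) / C(n,t)`. -/
noncomputable def totalInf {n : ℕ} (f : (Fin n → ZMod 2) → ZMod 2) (t : ℕ) : ℝ :=
  (∑ T ∈ univ.filter (fun T : Finset (Fin n) => T.card = t), influence f T) / (n.choose t)

/-- `p̂_f(k) = Σ_{wt(u) = k} (W_f(u))²`. -/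
noncomputable def pHat {n : ℕ} (f : (Fin n → ZMod 2) → ZMod 2) (k : ℕ) : ℝ :=
  ∑ u ∈ univ.filter (fun u : Fin n → ZMod 2 => wt u = k), (walsh f u) ^ 2

/-- `f` is `m`-resilient: the Walsh transform vanishes at all points of weight at most `m`. -/
def resilient {n : ℕ} (f : (Fin n → ZMod 2) → ZMod 2) (m : ℕ) : Prop :=
  ∀ a : Fin n → ZMod 2, wt a ≤ m → walsh f a = 0


/-! ### Auxiliary lemmas -/

noncomputable def e (a : ZMod 2) : ℝ := (-1) ^ a.val

lemma e_zero : e (0 : ZMod 2) = 1 := rfl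

lemma e_one : e (1 : ZMod 2) = -1 := by
  norm_num [e, ZMod.val_one]

lemma two_cases (a : ZMod 2) : a = 0 ∨ a = 1 := by revert a; decide

lemma e_add (a b : ZMod 2) : e (a + b) = e a * e b := by
  rcases two_cases a with h | h <;> rcases two_cases b with h' | h' <;>
    subst h <;> subst h' <;>
    simp only [show (0:ZMod 2)+0 = 0 from rfl, show (0:ZMod 2)+1 = 1 from rfl,
      show (1:ZMod 2)+0 = 1 from rfl, show (1:ZMod 2)+1 = 0 from rfl, e_zero, e_one] <;> ring

lemma e_inj {a b : ZMod 2} (h : e a = e b) : a = b := by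
  rcases two_cases a with h1 | h1 <;> rcases two_cases b with h2 | h2 <;>
    subst h1 <;> subst h2 <;>
    first
      | rfl
      | (rw [e_zero, e_one] at h; norm_num at h)
      | (rw [e_one, e_zero] at h; norm_num at h)

lemma e_sum {ι : Type*} (s : Finset ι) (g : ι → ZMod 2) :
    e (∑ i ∈ s, g i) = ∏ i ∈ s, e (g i) := by
  induction s using Finset.cons_induction with
  | empty => simp [e_zero]
  | cons i s hi ih => rw [Finset.sum_cons, Finset.prod_cons, e_add, ih]

lemma sum_e_mul (c : ZMod 2) : ∑ b : ZMod 2, e (b * c) = if c = 0 then 2 else 0 := by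
  have : ∑ b : ZMod 2, e (b * c) = e (0 * c) + e (1 * c) := by
    rw [show (univ : Finset (ZMod 2)) = {0, 1} by decide]
    simp
  rw [this]
  rcases two_cases c with h | h <;> subst h <;> norm_num [e_zero, e_one]

lemma sum_chi {n : ℕ} (u : Fin n → ZMod 2) :
    ∑ x : Fin n → ZMod 2, e (∑ i, x i * u i) = if u = 0 then (2:ℝ)^n else 0 := by
  have h1 : ∀ x : Fin n → ZMod 2, e (∑ i, x i * u i) = ∏ i, e (x i * u i) :=
    fun x => e_sum _ _
  simp_rw [h1]
  have key := Fintype.prod_sum (fun (i : Fin n) (b : ZMod 2) => e (b * u i))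
  rw [← key]
  simp_rw [sum_e_mul]
  by_cases hu : u = 0
  · subst hu; simp
  · rw [if_neg hu]
    obtain ⟨i, hi⟩ : ∃ i, u i ≠ 0 := by
      by_contra h; push_neg at h; exact hu (funext h)
    exact Finset.prod_eq_zero (mem_univ i) (by simp [hi])

lemma sum_chi_T {n : ℕ} (T : Finset (Fin n)) (u : Fin n → ZMod 2) :
    ∑ a ∈ univ.filter (fun a : Fin n → ZMod 2 => ∀ i, a i ≠ 0 → i ∈ T), e (∑ i, a i * u i)
      = if ∀ i ∈ T, u i = 0 then (2:ℝ) ^ T.card else 0 := by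
  classical
  have main : (∑ g : {i // i ∈ T} → ZMod 2, ∏ i : {i // i ∈ T}, e (g i * u i.1))
      = if ∀ i ∈ T, u i = 0 then (2:ℝ) ^ T.card else 0 := by
    have key := Fintype.prod_sum (fun (i : {i // i ∈ T}) (b : ZMod 2) => e (b * u i.1))
    rw [← key]
    simp_rw [sum_e_mul]
    by_cases h : ∀ i ∈ T, u i = 0
    · rw [if_pos h, Finset.prod_congr rfl (fun i _ => if_pos (h i.1 i.2)),
        Finset.prod_const]
      simp
    · rw [if_neg h]
      push_neg at h
      obtain ⟨i, hiT, hi⟩ := h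
      exact Finset.prod_eq_zero (mem_univ ⟨i, hiT⟩) (if_neg hi)
  rw [← main]
  refine Finset.sum_nbij' (i := fun a => fun i : {i // i ∈ T} => a i.1)
      (j := fun g => fun i => if h : i ∈ T then g ⟨i, h⟩ else 0)
      (fun a _ => mem_univ _) (fun g _ => ?_) (fun a ha => ?_) (fun g _ => ?_) (fun a ha => ?_)
  · simp only [mem_filter, mem_univ, true_and]
    intro i hi
    by_contra hiT
    simp [hiT] at hi
  · funext i
    by_cases hiT : i ∈ T
    · simp [hiT]
    · simp only [dif_neg hiT]
      have := (mem_filter.mp ha).2 i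
      by_contra h
      exact hiT (this fun hz => h hz.symm)
  · funext i
    simp [i.2]
  · rw [e_sum]
    refine Finset.prod_subset (subset_univ T) ?_ |>.symm.trans ?_
    · intro i _ hiT
      have hz : a i = 0 := by
        by_contra h
        exact hiT ((mem_filter.mp ha).2 i h)
      simp [hz, e_zero]
    · exact (Finset.prod_coe_sort T (fun i => e (a i * u i))).symm

lemma walsh_eq {n : ℕ} (f : (Fin n → ZMod 2) → ZMod 2) (a : Fin n → ZMod 2) :
    walsh f a = (1/2^n) * ∑ x : Fin n → ZMod 2, e (f x) * e (∑ i, x i * a i) := by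
  unfold walsh
  congr 1
  exact Finset.sum_congr rfl fun x _ => by rw [← e_add]; rfl

lemma sum_chi' {n : ℕ} (v : Fin n → ZMod 2) :
    ∑ u : Fin n → ZMod 2, e (∑ i, v i * u i) = if v = 0 then (2:ℝ)^n else 0 := by
  have h : ∀ u : Fin n → ZMod 2, (∑ i, v i * u i) = ∑ i, u i * v i :=
    fun u => Finset.sum_congr rfl fun i _ => mul_comm _ _
  simp_rw [h]
  exact sum_chi v

lemma add_add_eq_zero_iff : ∀ a b c : ZMod 2, a + b + c = 0 ↔ b = a + c := by decide

lemma add_self_zero : ∀ a : ZMod 2, a + a = 0 := by decide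

lemma card_V (n : ℕ) : Fintype.card (Fin n → ZMod 2) = 2 ^ n := by
  simp [Fintype.card_fun]

lemma walsh_sq_expand {n : ℕ} (f : (Fin n → ZMod 2) → ZMod 2) (u : Fin n → ZMod 2) :
    walsh f u ^ 2
      = (1/2^n)^2 * ∑ x : Fin n → ZMod 2, ∑ y : Fin n → ZMod 2,
          e (f x + f y) * e (∑ i, (x i + y i) * u i) := by
  rw [walsh_eq, mul_pow,
    pow_two (∑ x : Fin n → ZMod 2, e (f x) * e (∑ i, x i * u i)), Finset.sum_mul_sum]
  congr 1
  refine Finset.sum_congr rfl fun x _ => Finset.sum_congr rfl fun y _ => ?_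
  have h1 : (∑ i, (x i + y i) * u i) = (∑ i, x i * u i) + ∑ i, y i * u i := by
    rw [← Finset.sum_add_distrib]
    exact Finset.sum_congr rfl fun i _ => add_mul _ _ _
  rw [h1, e_add, e_add]
  ring

lemma autocorr_expand {n : ℕ} (f : (Fin n → ZMod 2) → ZMod 2) (a : Fin n → ZMod 2) :
    autocorr f a = ∑ u : Fin n → ZMod 2, walsh f u ^ 2 * e (∑ i, a i * u i) := by
  simp_rw [walsh_sq_expand, mul_assoc, Finset.sum_mul, mul_assoc]
  rw [← Finset.mul_sum]
  have swap : (∑ u : Fin n → ZMod 2, ∑ x : Fin n → ZMod 2, ∑ y : Fin n → ZMod 2,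
        e (f x + f y) * (e (∑ i, (x i + y i) * u i) * e (∑ i, a i * u i)))
      = ∑ x : Fin n → ZMod 2, ∑ y : Fin n → ZMod 2, ∑ u : Fin n → ZMod 2,
        e (f x + f y) * (e (∑ i, (x i + y i) * u i) * e (∑ i, a i * u i)) := by
    rw [Finset.sum_comm]
    exact Finset.sum_congr rfl fun x _ => Finset.sum_comm
  rw [swap]
  have inner : ∀ x y : Fin n → ZMod 2,
      (∑ u : Fin n → ZMod 2,
        e (f x + f y) * (e (∑ i, (x i + y i) * u i) * e (∑ i, a i * u i)))
      = e (f x + f y) * (if y = x + a then (2:ℝ)^n else 0) := by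
    intro x y
    rw [← Finset.mul_sum]
    congr 1
    have comb : ∀ u : Fin n → ZMod 2,
        e (∑ i, (x i + y i) * u i) * e (∑ i, a i * u i)
          = e (∑ i, (x i + y i + a i) * u i) := by
      intro u
      rw [← e_add, ← Finset.sum_add_distrib]
      congr 1
      exact Finset.sum_congr rfl fun i _ => (add_mul _ _ _).symm
    simp_rw [comb]
    rw [sum_chi' (fun i => x i + y i + a i)]
    have hc : ((fun i => x i + y i + a i) = (0 : Fin n → ZMod 2)) ↔ y = x + a := by
      rw [funext_iff, funext_iff]
      exact forall_congr' fun i => add_add_eq_zero_iff (x i) (y i) (a i)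
    simp_rw [hc]
  simp_rw [inner]
  have collapse : ∀ x : Fin n → ZMod 2,
      (∑ y : Fin n → ZMod 2, e (f x + f y) * (if y = x + a then (2:ℝ)^n else 0))
        = e (f x + f (x + a)) * 2^n := by
    intro x
    rw [Finset.sum_eq_single (x + a)]
    · simp
    · intro y _ hy; simp [hy]
    · intro h; exact absurd (mem_univ _) h
  simp_rw [collapse]
  unfold autocorr
  rw [← Finset.sum_mul]
  have he : ∀ x : Fin n → ZMod 2,
      ((-1:ℝ)) ^ (f x + f (x + a)).val = e (f x + f (x+a)) := fun _ => rfl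
  simp_rw [he]
  have h2n : (2:ℝ)^n ≠ 0 := by positivity
  field_simp

lemma parseval {n : ℕ} (f : (Fin n → ZMod 2) → ZMod 2) :
    ∑ u : Fin n → ZMod 2, walsh f u ^ 2 = 1 := by
  have h := autocorr_expand f 0
  have h0 : autocorr f 0 = 1 := by
    unfold autocorr
    have he : ∀ x : Fin n → ZMod 2, ((-1:ℝ)) ^ (f x + f (x + 0)).val = 1 := by
      intro x
      rw [add_zero, add_self_zero]
      rfl
    simp_rw [he]
    simp [card_V]
  rw [h0] at h
  rw [h]
  refine Finset.sum_congr rfl fun u _ => ?_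
  have hz : (∑ i, (0:Fin n → ZMod 2) i * u i) = 0 := by simp
  rw [hz, e_zero, mul_one]


lemma wt_le {n : ℕ} (u : Fin n → ZMod 2) : wt u ≤ n := by
  unfold wt
  exact (Finset.card_filter_le _ _).trans (by simp)

lemma wt_eq_zero_iff {n : ℕ} {u : Fin n → ZMod 2} : wt u = 0 ↔ u = 0 := by
  unfold wt
  rw [Finset.card_eq_zero, Finset.filter_eq_empty_iff, funext_iff]
  simp

lemma influence_eq {n : ℕ} (f : (Fin n → ZMod 2) → ZMod 2) (T : Finset (Fin n)) :
    influence f T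
      = ∑ u : Fin n → ZMod 2, walsh f u ^ 2 * (if ∀ i ∈ T, u i = 0 then 0 else 1) := by
  unfold influence
  simp_rw [autocorr_expand]
  rw [Finset.sum_comm]
  have inner : ∀ u, (∑ a ∈ univ.filter (fun a : Fin n → ZMod 2 => ∀ i, a i ≠ 0 → i ∈ T),
        walsh f u ^ 2 * e (∑ i, a i * u i))
      = walsh f u ^ 2 * (if ∀ i ∈ T, u i = 0 then (2:ℝ)^T.card else 0) := by
    intro u
    rw [← Finset.mul_sum, sum_chi_T]
  simp_rw [inner]
  have hr : ∀ u, walsh f u ^ 2 * (if ∀ i ∈ T, u i = 0 then (0:ℝ) else 1)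
      = walsh f u ^ 2 - (1/2^T.card) *
          (walsh f u ^ 2 * (if ∀ i ∈ T, u i = 0 then (2:ℝ)^T.card else 0)) := by
    intro u
    by_cases h : ∀ i ∈ T, u i = 0
    · simp only [if_pos h, mul_zero]
      have h2 : (2:ℝ)^T.card ≠ 0 := by positivity
      field_simp
      ring
    · simp [if_neg h]
  rw [Finset.sum_congr rfl (fun u _ => hr u), Finset.sum_sub_distrib, parseval,
    ← Finset.mul_sum]

lemma count_T {n t : ℕ} (u : Fin n → ZMod 2) :
    ∑ T ∈ univ.filter (fun T : Finset (Fin n) => T.card = t),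
      (if ∀ i ∈ T, u i = 0 then (0:ℝ) else 1)
    = (n.choose t : ℝ) - ((n - wt u).choose t : ℝ) := by
  classical
  set Z : Finset (Fin n) := univ.filter (fun i => u i = 0) with hZ
  have hZcard : Z.card = n - wt u := by
    have hZ2 : Z = (univ.filter fun i => u i ≠ 0)ᶜ := by
      ext i
      simp [hZ]
    rw [hZ2, Finset.card_compl]
    simp only [Fintype.card_fin]
    rfl
  set A := univ.filter (fun T : Finset (Fin n) => T.card = t) with hA
  have hAcard : A.card = n.choose t := by
    have : A = Finset.powersetCard t (univ : Finset (Fin n)) := by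
      ext T
      simp [hA, Finset.mem_powersetCard]
    rw [this, Finset.card_powersetCard]
    simp
  have hPcard : (A.filter fun T => ∀ i ∈ T, u i = 0).card = (n - wt u).choose t := by
    have : (A.filter fun T => ∀ i ∈ T, u i = 0) = Finset.powersetCard t Z := by
      ext T
      simp only [hA, Finset.mem_filter, Finset.mem_univ, true_and,
        Finset.mem_powersetCard, hZ]
      constructor
      · rintro ⟨hc, hsub⟩
        exact ⟨fun i hi => Finset.mem_filter.mpr ⟨Finset.mem_univ _, hsub i hi⟩, hc⟩
      · rintro ⟨hsub, hc⟩
        exact ⟨hc, fun i hi => (Finset.mem_filter.mp (hsub hi)).2⟩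
    rw [this, Finset.card_powersetCard, hZcard]
  rw [Finset.sum_ite]
  simp only [Finset.sum_const, nsmul_eq_mul, smul_eq_mul, mul_zero, mul_one, zero_add]
  have hsplit := Finset.card_filter_add_card_filter_not
    (s := A) (p := fun T => ∀ i ∈ T, u i = 0)
  have hle : (n - wt u).choose t ≤ n.choose t := Nat.choose_le_choose t (by omega)
  have : (A.filter fun T => ¬ ∀ i ∈ T, u i = 0).card = n.choose t - (n - wt u).choose t := by
    omega
  rw [this, Nat.cast_sub hle]

lemma totalInf_eq {n t : ℕ} (f : (Fin n → ZMod 2) → ZMod 2) (h2 : t ≤ n) :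
    totalInf f t
      = 1 - (∑ u : Fin n → ZMod 2, walsh f u ^ 2 * ((n - wt u).choose t : ℝ))
          / (n.choose t : ℝ) := by
  have hcnt : (0:ℝ) < (n.choose t : ℝ) := by
    exact_mod_cast Nat.choose_pos h2
  unfold totalInf
  simp_rw [influence_eq]
  rw [Finset.sum_comm]
  have step : ∀ u : Fin n → ZMod 2,
      (∑ T ∈ univ.filter (fun T : Finset (Fin n) => T.card = t),
        walsh f u ^ 2 * (if ∀ i ∈ T, u i = 0 then (0:ℝ) else 1))
      = walsh f u ^ 2 * ((n.choose t : ℝ) - ((n - wt u).choose t : ℝ)) := by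
    intro u
    rw [← Finset.mul_sum, count_T]
  simp_rw [step, mul_sub]
  rw [Finset.sum_sub_distrib, ← Finset.sum_mul, parseval, one_mul, sub_div,
    div_self (ne_of_gt hcnt)]

lemma inversion {n : ℕ} (f : (Fin n → ZMod 2) → ZMod 2) (x : Fin n → ZMod 2) :
    e (f x) = ∑ u : Fin n → ZMod 2, walsh f u * e (∑ i, x i * u i) := by
  simp_rw [walsh_eq, mul_assoc, Finset.sum_mul, mul_assoc]
  rw [← Finset.mul_sum, Finset.sum_comm]
  have hadd : ∀ a b : ZMod 2, a + b = 0 ↔ a = b := by decide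
  have inner : ∀ y : Fin n → ZMod 2,
      (∑ u : Fin n → ZMod 2, e (f y) * (e (∑ i, y i * u i) * e (∑ i, x i * u i)))
      = e (f y) * (if y = x then (2:ℝ)^n else 0) := by
    intro y
    rw [← Finset.mul_sum]
    congr 1
    have comb : ∀ u : Fin n → ZMod 2,
        e (∑ i, y i * u i) * e (∑ i, x i * u i) = e (∑ i, (y i + x i) * u i) := by
      intro u
      rw [← e_add, ← Finset.sum_add_distrib]
      congr 1
      exact Finset.sum_congr rfl fun i _ => (add_mul _ _ _).symm
    simp_rw [comb]
    rw [sum_chi' (fun i => y i + x i)]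
    have hc : ((fun i => y i + x i) = (0 : Fin n → ZMod 2)) ↔ y = x := by
      rw [funext_iff, funext_iff]
      exact forall_congr' fun i => hadd (y i) (x i)
    simp_rw [hc]
  simp_rw [inner]
  rw [Finset.sum_eq_single x]
  · have h2 : (2:ℝ)^n ≠ 0 := by positivity
    field_simp
    simp
  · intro y _ hy; simp [hy]
  · intro h; exact absurd (mem_univ _) h

lemma const_iff {n : ℕ} (f : (Fin n → ZMod 2) → ZMod 2) :
    (∀ u : Fin n → ZMod 2, u ≠ 0 → walsh f u = 0) ↔ ∃ c : ZMod 2, ∀ x, f x = c := by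
  constructor
  · intro h
    refine ⟨f 0, fun x => ?_⟩
    have key : ∀ x : Fin n → ZMod 2, e (f x) = walsh f 0 := by
      intro x
      rw [inversion f x, Finset.sum_eq_single 0]
      · simp [e_zero]
      · intro u _ hu; rw [h u hu, zero_mul]
      · intro h'; exact absurd (mem_univ _) h'
    exact e_inj ((key x).trans (key 0).symm)
  · rintro ⟨c, hc⟩ u hu
    rw [walsh_eq]
    simp_rw [hc]
    rw [← Finset.mul_sum, sum_chi u, if_neg hu, mul_zero, mul_zero]

lemma choose_strict {n t m : ℕ} (h1 : 1 ≤ t) (h2 : t ≤ n) (hm : m < n) :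
    m.choose t < n.choose t := by
  obtain ⟨s, rfl⟩ : ∃ s, t = s + 1 := ⟨t - 1, by omega⟩
  calc m.choose (s+1) ≤ (n-1).choose (s+1) := Nat.choose_le_choose _ (by omega)
    _ < (n-1).choose (s+1) + (n-1).choose s := by
        have : 0 < (n-1).choose s := Nat.choose_pos (by omega)
        omega
    _ = ((n-1)+1).choose (s+1) := by rw [Nat.choose_succ_succ]; simp only [Nat.succ_eq_add_one]; omega
    _ = n.choose (s+1) := by congr 1; omega

/-- `t-inf(f)` attains its maximum value 1 iff `f` is `(n-t)`-resilient, and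
its minimum value 0 iff `f` is constant. -/
theorem totalInf_max_min {n : ℕ} (f : (Fin n → ZMod 2) → ZMod 2) (t : ℕ)
    (h1 : 1 ≤ t) (h2 : t ≤ n) :
    (totalInf f t = 1 ↔ resilient f (n - t)) ∧
      (totalInf f t = 0 ↔ ∃ c : ZMod 2, ∀ x, f x = c) := by
  have hcnt : (0:ℝ) < (n.choose t : ℝ) := by exact_mod_cast Nat.choose_pos h2
  have hT := totalInf_eq f h2
  set A : ℝ := ∑ u : Fin n → ZMod 2, walsh f u ^ 2 * ((n - wt u).choose t : ℝ) with hA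
  constructor
  · -- maximum
    rw [hT]
    have hiff : 1 - A / (n.choose t : ℝ) = 1 ↔ A = 0 := by
      constructor
      · intro h
        have hd : A / (n.choose t : ℝ) = 0 := by linarith
        rcases div_eq_zero_iff.mp hd with h' | h'
        · exact h'
        · exact absurd h' (ne_of_gt hcnt)
      · intro h; rw [h]; simp
    rw [hiff]
    have hterm : ∀ u ∈ (univ : Finset (Fin n → ZMod 2)),
        0 ≤ walsh f u ^ 2 * ((n - wt u).choose t : ℝ) := by
      intro u _; positivity
    rw [hA, Finset.sum_eq_zero_iff_of_nonneg hterm]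
    constructor
    · intro h a ha
      have hta : t ≤ n - wt a := by have := wt_le a; omega
      have hc : (0:ℝ) < ((n - wt a).choose t : ℝ) := by
        exact_mod_cast Nat.choose_pos hta
      have h0 := h a (mem_univ a)
      have hsq : walsh f a ^ 2 = 0 := by
        rcases mul_eq_zero.mp h0 with h' | h'
        · exact h'
        · exact absurd h' (ne_of_gt hc)
      exact pow_eq_zero_iff (by norm_num) |>.mp hsq
    · intro hres u _
      by_cases hw : wt u ≤ n - t
      · rw [hres u hw]; ring
      · have hlt : n - wt u < t := by have := wt_le u; omega
        rw [Nat.choose_eq_zero_of_lt hlt]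
        simp
  · -- minimum
    rw [hT]
    have hiff : 1 - A / (n.choose t : ℝ) = 0 ↔ A = (n.choose t : ℝ) := by
      rw [sub_eq_zero, eq_comm, div_eq_one_iff_eq (ne_of_gt hcnt)]
    rw [hiff, ← const_iff f]
    have hsum : (∑ u : Fin n → ZMod 2,
          walsh f u ^ 2 * ((n.choose t : ℝ) - ((n - wt u).choose t : ℝ)))
        = (n.choose t : ℝ) - A := by
      simp_rw [mul_sub]
      rw [Finset.sum_sub_distrib, ← Finset.sum_mul, parseval, one_mul, hA]
    have hterm : ∀ u ∈ (univ : Finset (Fin n → ZMod 2)),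
        0 ≤ walsh f u ^ 2 * ((n.choose t : ℝ) - ((n - wt u).choose t : ℝ)) := by
      intro u _
      have hle : ((n - wt u).choose t : ℝ) ≤ (n.choose t : ℝ) := by
        exact_mod_cast Nat.choose_le_choose t (by omega)
      exact mul_nonneg (sq_nonneg _) (by linarith)
    constructor
    · intro hA0
      have hz0 : (∑ u : Fin n → ZMod 2,
          walsh f u ^ 2 * ((n.choose t : ℝ) - ((n - wt u).choose t : ℝ))) = 0 := by
        rw [hsum, hA0]; ring
      have hz := (Finset.sum_eq_zero_iff_of_nonneg hterm).mp hz0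
      intro u hu
      have hwt : 1 ≤ wt u := by
        rcases Nat.eq_zero_or_pos (wt u) with h | h
        · exact absurd (wt_eq_zero_iff.mp h) hu
        · exact h
      have hlt : ((n - wt u).choose t : ℝ) < (n.choose t : ℝ) := by
        exact_mod_cast choose_strict h1 h2 (by have := wt_le u; omega)
      have h0 := hz u (mem_univ u)
      rcases mul_eq_zero.mp h0 with h' | h'
      · exact pow_eq_zero_iff (by norm_num) |>.mp h'
      · exact absurd h' (by intro hc; linarith)
    · intro hcon
      have hz0 : (∑ u : Fin n → ZMod 2,
          walsh f u ^ 2 * ((n.choose t : ℝ) - ((n - wt u).choose t : ℝ))) = 0 := by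
        refine Finset.sum_eq_zero fun u _ => ?_
        by_cases hu : u = 0
        · subst hu
          have hw0 : wt (0 : Fin n → ZMod 2) = 0 := wt_eq_zero_iff.mpr rfl
          rw [hw0]
          simp
        · rw [hcon u hu]; ring
      rw [hsum] at hz0
      linarith


end BF
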